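/- Let κ ∈ ℕ and n ≥ κ. Let a ∈ L^1(𝕋) have Fourier coefficients {a_k} and suppose T_n(a) = (a_{j−k})_{j,k=0}^n is invertible. Then the determinant of the κ×κ upper-right corner block of T_n^{-1}(a) (rows 0,…,κ−1 and columns n−κ+1,…,n) equals (−1)^{nκ} D_{n−κ}[a(t)t^{κ}]/D_n(a), where D_m[a(t)t^{κ}] = det(a_{j−k−κ})_{j,k=0}^m. -/

import Mathlib

open Matrix Equiv

lemma finRotate_pow_val (n k : ℕ) : ∀ x : Fin (n + 1),
    (((finRotate (n + 1)) ^ k) x).1 = (x.1 + k) % (n + 1) := by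
  induction k with
  | zero => intro x; simp [Nat.mod_eq_of_lt x.isLt]
  | succ k ih =>
      intro x
      rw [pow_succ, Equiv.Perm.mul_apply, finRotate_succ_apply, ih, Fin.add_def,
        Fin.val_one', Nat.mod_add_mod,
        show x.1 + 1 % (n + 1) + k = x.1 + k + 1 % (n + 1) from by ring,
        Nat.add_mod_mod]
      congr 1

theorem stmt_14 (a : ℤ → ℂ) (n κ : ℕ) (hκ : 1 ≤ κ) (hn : κ ≤ n)
    (T : Matrix (Fin (n + 1)) (Fin (n + 1)) ℂ)
    (hT : ∀ j k, T j k = a ((j.1 : ℤ) - (k.1 : ℤ)))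
    (hinv : IsUnit T) :
    Matrix.det (Matrix.of fun i j : Fin κ =>
        T⁻¹ ⟨i.1, by have hi := i.isLt; omega⟩
            ⟨n - κ + 1 + j.1, by have hj := j.isLt; omega⟩) =
      (-1 : ℂ) ^ (n * κ) *
        (Matrix.det (Matrix.of fun j k : Fin (n - κ + 1) =>
          a ((j.1 : ℤ) - (k.1 : ℤ) - (κ : ℤ))) / T.det) := by
  classical
  have hdet : IsUnit T.det := (Matrix.isUnit_iff_isUnit_det T).mp hinv
  have hTinv : T * T⁻¹ = 1 := Matrix.mul_nonsing_inv T hdet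
  set m := n - κ + 1 with hm
  have hsum : κ + m = n + 1 := by omega
  have hsum' : m + κ = n + 1 := by omega
  -- the two reindexing equivalences
  set s : Fin κ ⊕ Fin m ≃ Fin (n + 1) := finSumFinEquiv.trans (finCongr hsum) with hs
  set r : Fin κ ⊕ Fin m ≃ Fin (n + 1) :=
    (Equiv.sumComm _ _).trans (finSumFinEquiv.trans (finCongr hsum')) with hr
  have hs_inl : ∀ i : Fin κ, (s (Sum.inl i)).1 = i.1 := by intro i; simp [hs]
  have hs_inr : ∀ j : Fin m, (s (Sum.inr j)).1 = κ + j.1 := by intro j; simp [hs]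
  have hr_inl : ∀ i : Fin κ, (r (Sum.inl i)).1 = m + i.1 := by intro i; simp [hr]
  have hr_inr : ∀ j : Fin m, (r (Sum.inr j)).1 = j.1 := by intro j; simp [hr]
  -- the blocks
  set X : Matrix (Fin κ) (Fin κ) ℂ :=
    Matrix.of (fun i j : Fin κ => T⁻¹ (s (Sum.inl i)) (r (Sum.inl j))) with hX
  set Y : Matrix (Fin m) (Fin κ) ℂ :=
    Matrix.of (fun j : Fin m => fun i : Fin κ => T⁻¹ (s (Sum.inr j)) (r (Sum.inl i))) with hY
  set B : Matrix (Fin κ) (Fin m) ℂ :=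
    Matrix.of (fun i : Fin κ => fun j : Fin m => T (r (Sum.inl i)) (s (Sum.inr j))) with hB
  set D : Matrix (Fin m) (Fin m) ℂ :=
    Matrix.of (fun j k : Fin m => a ((j.1 : ℤ) - (k.1 : ℤ) - (κ : ℤ))) with hD
  set M : Matrix (Fin κ ⊕ Fin m) (Fin κ ⊕ Fin m) ℂ := Matrix.fromBlocks X 0 Y 1 with hM
  set T' : Matrix (Fin κ ⊕ Fin m) (Fin κ ⊕ Fin m) ℂ := T.submatrix s s with hT'
  set ρ : Equiv.Perm (Fin κ ⊕ Fin m) := r.trans s.symm with hρ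
  -- LHS matrix is X
  have hgoalX : (Matrix.of fun i j : Fin κ =>
      T⁻¹ ⟨i.1, by have hi := i.isLt; omega⟩
          ⟨m + j.1, by have hj := j.isLt; omega⟩) = X := by
    ext i j
    have e1 : s (Sum.inl i) = ⟨i.1, by have := i.isLt; omega⟩ := Fin.ext (hs_inl i)
    have e2 : r (Sum.inl j) = ⟨m + j.1, by have := j.isLt; omega⟩ := Fin.ext (hr_inl j)
    simp only [Matrix.of_apply, hX, e1, e2]
  -- product entries
  have hTM : ∀ p q, (T' * M) p q = Sum.elim
      (fun i' : Fin κ => if s p = r (Sum.inl i') then (1 : ℂ) else 0)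
      (fun j' : Fin m => T (s p) (s (Sum.inr j'))) q := by
    intro p q
    rw [Matrix.mul_apply, Fintype.sum_sum_type]
    cases q with
    | inl i' =>
        have : ∀ w : Fin κ ⊕ Fin m, T' p w * M w (Sum.inl i')
            = T (s p) (s w) * T⁻¹ (s w) (r (Sum.inl i')) := by
          intro w
          cases w <;> simp [hT', hM, hX, hY, Matrix.fromBlocks, Matrix.submatrix_apply]
        simp only [this]
        rw [← Fintype.sum_sum_type (fun w => T (s p) (s w) * T⁻¹ (s w) (r (Sum.inl i')))]
        rw [Equiv.sum_comp s (fun u => T (s p) u * T⁻¹ u (r (Sum.inl i')))]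
        have := congrFun (congrFun hTinv (s p)) (r (Sum.inl i'))
        rw [Matrix.mul_apply] at this
        rw [this, Matrix.one_apply]
        rfl
    | inr j' =>
        have h1 : ∀ w : Fin κ, T' p (Sum.inl w) * M (Sum.inl w) (Sum.inr j') = 0 := by
          intro w; simp [hM, Matrix.fromBlocks]
        have h2 : ∀ w : Fin m, T' p (Sum.inr w) * M (Sum.inr w) (Sum.inr j')
            = if w = j' then T (s p) (s (Sum.inr w)) else 0 := by
          intro w
          by_cases hw : w = j' <;>
            simp [hT', hM, Matrix.fromBlocks, Matrix.one_apply, hw]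
        simp only [h1, h2]
        simp
  -- the permuted product is block triangular
  have hblock : (T' * M).submatrix ρ id = Matrix.fromBlocks 1 B 0 D := by
    ext p q
    have hsρ : ∀ p, s (ρ p) = r p := by intro p; simp [hρ]
    cases p with
    | inl i =>
        cases q with
        | inl i' =>
            simp only [Matrix.submatrix_apply, id, hTM, Sum.elim_inl, hsρ]
            rw [Matrix.fromBlocks_apply₁₁, Matrix.one_apply]
            by_cases h : i = i'
            · subst h; simp
            · have : r (Sum.inl i) ≠ r (Sum.inl i') := by
                simp only [ne_eq, EmbeddingLike.apply_eq_iff_eq, Sum.inl.injEq]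
                exact h
              simp [h, this]
        | inr j' =>
            simp only [Matrix.submatrix_apply, id, hTM, Sum.elim_inr, hsρ]
            rw [Matrix.fromBlocks_apply₁₂]
            simp [hB]
    | inr j =>
        cases q with
        | inl i' =>
            simp only [Matrix.submatrix_apply, id, hTM, Sum.elim_inl, hsρ]
            rw [Matrix.fromBlocks_apply₂₁]
            have : r (Sum.inr j) ≠ r (Sum.inl i') := by
              simp only [ne_eq, EmbeddingLike.apply_eq_iff_eq]
              exact fun h => by cases h
            simp [this]
        | inr j' =>
            simp only [Matrix.submatrix_apply, id, hTM, Sum.elim_inr, hsρ]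
            rw [Matrix.fromBlocks_apply₂₂]
            rw [hT]
            simp only [hD, Matrix.of_apply]
            congr 1
            rw [hr_inr, hs_inr]
            push_cast
            ring
  -- signs
  have hsign : (Equiv.Perm.sign ρ : ℤ) = (-1 : ℤ) ^ (n * κ) := by
    have hconj : Equiv.Perm.sign (s.permCongr ρ) = Equiv.Perm.sign ρ :=
      Equiv.Perm.sign_permCongr s ρ
    have hrot : s.permCongr ρ = (finRotate (n + 1)) ^ m := by
      ext x
      rw [finRotate_pow_val]
      simp only [Equiv.permCongr_apply, hρ, Equiv.trans_apply, Equiv.apply_symm_apply]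
      rcases lt_or_ge x.1 κ with h | h
      · have hx : s.symm x = Sum.inl ⟨x.1, h⟩ := by
          rw [Equiv.symm_apply_eq]; apply Fin.ext; rw [hs_inl]
        rw [hx, hr_inl]
        have : x.1 + m < n + 1 := by omega
        rw [Nat.mod_eq_of_lt this]
        show m + x.1 = x.1 + m
        omega
      · have hx : s.symm x = Sum.inr ⟨x.1 - κ, by have := x.isLt; omega⟩ := by
          rw [Equiv.symm_apply_eq]; apply Fin.ext; rw [hs_inr]
          show x.1 = κ + (x.1 - κ)
          omega
        rw [hx, hr_inr]
        have hx2 := x.isLt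
        have : x.1 + m = (n + 1) + (x.1 - κ) := by omega
        rw [this, Nat.add_mod_left, Nat.mod_eq_of_lt (by omega)]
    have hpar : (-1 : ℤˣ) ^ (n * m) = (-1 : ℤˣ) ^ (n * κ) := by
      rcases Nat.even_or_odd n with he | ho
      · rw [(he.mul_right m).neg_one_pow, (he.mul_right κ).neg_one_pow]
      · rcases Nat.even_or_odd κ with hek | hok
        · have h1 : Even m := by
            rcases hek with ⟨c, hc⟩; rcases ho with ⟨d, hd⟩
            exact ⟨(n - κ + 1) / 2, by omega⟩
          rw [(h1.mul_left n).neg_one_pow, (hek.mul_left n).neg_one_pow]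
        · have h1 : Odd m := by
            rcases hok with ⟨c, hc⟩; rcases ho with ⟨d, hd⟩
            exact ⟨(n - κ) / 2, by omega⟩
          rw [(ho.mul h1).neg_one_pow, (ho.mul hok).neg_one_pow]
    rw [← hconj, hrot, map_pow, sign_finRotate, Nat.add_sub_cancel, ← pow_mul, hpar]
    push_cast
    ring
  -- determinants
  have hdetM : M.det = X.det := by
    rw [hM, Matrix.det_fromBlocks_zero₁₂]
    simp
  have hdetTM : ((T' * M).submatrix ρ id).det = T.det * X.det * (Equiv.Perm.sign ρ : ℤ) := by
    rw [Matrix.det_permute, Matrix.det_mul, hT', Matrix.det_submatrix_equiv_self, hdetM]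
    ring
  have hkey : (1 : Matrix (Fin κ) (Fin κ) ℂ).det * D.det
      = T.det * X.det * (Equiv.Perm.sign ρ : ℤ) := by
    rw [← Matrix.det_fromBlocks_zero₂₁, ← hblock, hdetTM]
  rw [Matrix.det_one, one_mul] at hkey
  -- finish
  rw [hgoalX]
  have hc : ((Equiv.Perm.sign ρ : ℤ) : ℂ) = (-1 : ℂ) ^ (n * κ) := by
    rw [hsign]; push_cast; ring
  have hne : T.det ≠ 0 := hdet.ne_zero
  rw [hc] at hkey
  have hcc : ((-1 : ℂ) ^ (n * κ)) * ((-1 : ℂ) ^ (n * κ)) = 1 := by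
    rw [← pow_add, Even.neg_one_pow ⟨n * κ, rfl⟩]
  have h2 : (-1 : ℂ) ^ (n * κ) * D.det = T.det * X.det := by
    rw [hkey]; linear_combination T.det * X.det * hcc
  field_simp
  linear_combination -h2
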